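/- For every (x₀,x₁) ∈ {0,1}² there exist eight unitary 4×4 complex matrices U₁, …, U₈ such that for every 4×4 complex matrix ρ: F_{(x₀,x₁)}(ρ) = (1/8)·Σ_{j=1}^{8} U_j ρ U_jᴴ. That is, each strong oblivious transfer channel is a uniform mixture of unitary conjugations. -/

import Mathlib

open Matrix Kronecker ComplexOrder

/-- The square root of a positive semidefinite matrix, as `Matrix.PosSemidef.sqrt` was defined
in the older Mathlib (removed since). -/
noncomputable def Matrix.PosSemidef.sqrt {n 𝕜 : Type*} [Fintype n] [DecidableEq n] [RCLike 𝕜]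
    {A : Matrix n n 𝕜} (hA : A.PosSemidef) : Matrix n n 𝕜 :=
  (hA.1.eigenvectorUnitary : Matrix n n 𝕜) *
    diagonal ((RCLike.ofReal : ℝ → 𝕜) ∘ Real.sqrt ∘ hA.1.eigenvalues) *
    (star hA.1.eigenvectorUnitary : Matrix n n 𝕜)
/-- The trace norm `‖A‖₁ = Tr √(Aᴴ A)` of a complex matrix. -/
noncomputable def traceNorm {n : Type*} [Fintype n] [DecidableEq n] (A : Matrix n n ℂ) : ℝ :=
  ((Matrix.posSemidef_conjTranspose_mul_self A).sqrt.trace).re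

/-- The trace distance `Δ(ρ,σ) = ‖ρ - σ‖₁ / 2`. -/
noncomputable def traceDist {n : Type*} [Fintype n] [DecidableEq n] (ρ σ : Matrix n n ℂ) : ℝ :=
  traceNorm (ρ - σ) / 2

open scoped Classical in
/-- Positive semidefinite square root (junk value `0` on non-PSD matrices). -/
noncomputable def psdSqrt {n : Type*} [Fintype n] [DecidableEq n] (A : Matrix n n ℂ) :
    Matrix n n ℂ :=
  if h : A.PosSemidef then h.sqrt else 0

/-- The fidelity `F(ρ,σ) = ‖√ρ √σ‖₁`. -/
noncomputable def fidelity {n : Type*} [Fintype n] [DecidableEq n] (ρ σ : Matrix n n ℂ) : ℝ :=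
  traceNorm (psdSqrt ρ * psdSqrt σ)

/-- A density matrix: positive semidefinite with trace 1. -/
def IsDensityMatrix {n : Type*} [Fintype n] [DecidableEq n] (ρ : Matrix n n ℂ) : Prop :=
  ρ.PosSemidef ∧ ρ.trace = 1

/-- The projector `|b⟩⟨b|` on ℂ². -/
noncomputable def proj (b : Bool) : Matrix Bool Bool ℂ := Matrix.single b b 1

/-- The strong oblivious transfer channel `F_{(x₀,x₁)}`. -/
noncomputable def sotChannel (x₀ x₁ : Bool) (ρ : Matrix (Bool × Bool) (Bool × Bool) ℂ) :
    Matrix (Bool × Bool) (Bool × Bool) ℂ :=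
  ∑ i : Bool, ∑ i' : Bool,
    ρ (i, i') (i, i') •
      (((1/2 : ℂ) • (1 : Matrix Bool Bool ℂ)) ⊗ₖ proj (xor (bif xor i i' then x₁ else x₀) i'))


namespace Stmt16

def ff (x₀ x₁ i i' : Bool) : Bool := xor (bif xor i i' then x₁ else x₀) i'

def gg (x₀ x₁ i i' : Bool) : Bool := bif xor x₀ x₁ then i' else i

noncomputable def ph (a b q q' : Bool) : ℂ :=
  (if a && q then (-1 : ℂ) else 1) * (if b && q' then (-1 : ℂ) else 1)

noncomputable def Umat (x₀ x₁ a b k : Bool) : Matrix (Bool × Bool) (Bool × Bool) ℂ :=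
  Matrix.of fun p q =>
    if p = (xor k (gg x₀ x₁ q.1 q.2), ff x₀ x₁ q.1 q.2) then ph a b q.1 q.2 else 0

lemma Umat_apply (x₀ x₁ a b k : Bool) (p q : Bool × Bool) :
    Umat x₀ x₁ a b k p q =
      if p = (xor k (gg x₀ x₁ q.1 q.2), ff x₀ x₁ q.1 q.2) then ph a b q.1 q.2 else 0 := rfl

set_option maxHeartbeats 1600000 in
lemma Umat_unitary (x₀ x₁ a b k : Bool) :
    (Umat x₀ x₁ a b k)ᴴ * Umat x₀ x₁ a b k = 1 := by
  cases x₀ <;> cases x₁ <;> cases a <;> cases b <;> cases k <;>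
    · ext ⟨p, p'⟩ ⟨q, q'⟩
      simp only [Matrix.mul_apply, Matrix.conjTranspose_apply, Fintype.sum_prod_type,
        Fintype.sum_bool, Matrix.one_apply, Umat_apply, ff, gg, ph, Bool.true_and,
        Bool.false_and, Bool.and_true, Bool.and_false, Bool.xor_false, Bool.xor_true,
        Bool.cond_true, Bool.cond_false, Bool.not_true, Bool.not_false, Bool.false_eq_true,
        Bool.true_eq_false, if_true, if_false, reduceIte, star_one, star_neg, star_zero,
        _root_.map_one, map_neg, map_zero, mul_one, one_mul]
      cases p <;> cases p' <;> cases q <;> cases q' <;>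
        · simp only [Prod.mk.injEq, Bool.false_eq_true, Bool.true_eq_false, and_true,
            and_false, true_and, false_and, and_self, if_true, if_false, ite_true, ite_false,
            reduceIte, mul_one, one_mul, mul_zero, zero_mul, add_zero, zero_add, star_one,
            star_neg, star_zero, _root_.map_one, map_neg, map_zero]
          norm_num

set_option maxHeartbeats 1600000 in
lemma key (x₀ x₁ : Bool) (ρ : Matrix (Bool × Bool) (Bool × Bool) ℂ) :
    sotChannel x₀ x₁ ρ = (1/8 : ℂ) •
      ∑ a : Bool, ∑ b : Bool, ∑ k : Bool,
        Umat x₀ x₁ a b k * ρ * (Umat x₀ x₁ a b k)ᴴ := by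
  cases x₀ <;> cases x₁ <;>
    · ext ⟨p, p'⟩ ⟨q, q'⟩
      simp only [sotChannel, proj, Matrix.smul_apply, Matrix.sum_apply, Matrix.mul_apply,
        Matrix.conjTranspose_apply, Fintype.sum_prod_type, Fintype.sum_bool,
        Matrix.kroneckerMap_apply, Matrix.one_apply, Matrix.single, Matrix.of_apply,
        Matrix.add_apply, Umat_apply, ff, gg, ph, Bool.true_and, Bool.false_and,
        Bool.and_true, Bool.and_false, Bool.xor_false, Bool.xor_true, Bool.cond_true,
        Bool.cond_false, Bool.not_true, Bool.not_false, Bool.false_eq_true, Bool.true_eq_false,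
        if_true, if_false, reduceIte, star_one, star_neg, star_zero, _root_.map_one, map_neg,
        map_zero, smul_eq_mul, mul_one, one_mul]
      cases p <;> cases p' <;> cases q <;> cases q' <;>
        · simp only [Prod.mk.injEq, Bool.false_eq_true, Bool.true_eq_false, and_true,
            and_false, true_and, false_and, and_self, if_true, if_false, ite_true, ite_false,
            reduceIte, mul_one, one_mul, mul_zero, zero_mul, add_zero, zero_add, star_one,
            star_neg, star_zero, _root_.map_one, map_neg, map_zero]
          norm_num
          ring

noncomputable def UU (x₀ x₁ : Bool) : Fin 8 → Matrix (Bool × Bool) (Bool × Bool) ℂ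
  | 0 => Umat x₀ x₁ true true true
  | 1 => Umat x₀ x₁ true true false
  | 2 => Umat x₀ x₁ true false true
  | 3 => Umat x₀ x₁ true false false
  | 4 => Umat x₀ x₁ false true true
  | 5 => Umat x₀ x₁ false true false
  | 6 => Umat x₀ x₁ false false true
  | 7 => Umat x₀ x₁ false false false

lemma UU0 (x₀ x₁ : Bool) : UU x₀ x₁ 0 = Umat x₀ x₁ true true true := rfl
lemma UU1 (x₀ x₁ : Bool) : UU x₀ x₁ 1 = Umat x₀ x₁ true true false := rfl
lemma UU2 (x₀ x₁ : Bool) : UU x₀ x₁ 2 = Umat x₀ x₁ true false true := rfl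
lemma UU3 (x₀ x₁ : Bool) : UU x₀ x₁ 3 = Umat x₀ x₁ true false false := rfl
lemma UU4 (x₀ x₁ : Bool) : UU x₀ x₁ 4 = Umat x₀ x₁ false true true := rfl
lemma UU5 (x₀ x₁ : Bool) : UU x₀ x₁ 5 = Umat x₀ x₁ false true false := rfl
lemma UU6 (x₀ x₁ : Bool) : UU x₀ x₁ 6 = Umat x₀ x₁ false false true := rfl
lemma UU7 (x₀ x₁ : Bool) : UU x₀ x₁ 7 = Umat x₀ x₁ false false false := rfl

end Stmt16

/-- Each strong oblivious transfer channel is a uniform mixture of eight unitary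
conjugations. -/
theorem stmt_16 (x₀ x₁ : Bool) :
    ∃ U : Fin 8 → Matrix (Bool × Bool) (Bool × Bool) ℂ,
      (∀ j, (U j)ᴴ * U j = 1) ∧
      ∀ ρ : Matrix (Bool × Bool) (Bool × Bool) ℂ,
        sotChannel x₀ x₁ ρ = (1/8 : ℂ) • ∑ j, U j * ρ * (U j)ᴴ := by
  refine ⟨Stmt16.UU x₀ x₁, ?_, ?_⟩
  · intro j
    fin_cases j <;> exact Stmt16.Umat_unitary x₀ x₁ _ _ _
  · intro ρ
    rw [Stmt16.key x₀ x₁ ρ]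
    congr 1
    rw [Fin.sum_univ_eight]
    simp only [Fintype.sum_bool, Stmt16.UU0, Stmt16.UU1, Stmt16.UU2, Stmt16.UU3,
      Stmt16.UU4, Stmt16.UU5, Stmt16.UU6, Stmt16.UU7]
    abel
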